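/- Let S = R ∪ B be a two-colored finite point set in ℝ² and let H ⊆ R₁ be a set of rectangles such that no two elements of H have a piercing intersection or a corner intersection. Then the intersection graph G(H) (vertex set H, two rectangles adjacent if and only if they are distinct and their intersection is nonempty) contains no cycle, i.e., it is a forest. -/

import Mathlib

open Set

/-- Points of the plane. -/
abbrev Pt : Type := ℝ × ℝ

/-- `D a b` is the closed axis-aligned rectangle having the segment from `a` to `b`
as a diagonal, i.e. the minimum enclosing axis-aligned rectangle of `a` and `b`. -/
def D (a b : Pt) : Set Pt :=
  Set.Icc (min a.1 b.1) (max a.1 b.1) ×ˢ Set.Icc (min a.2 b.2) (max a.2 b.2)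

/-- `Pierces R₂ R₁` : the projection of `R₁` onto the x-axis contains that of `R₂`,
and the projection of `R₂` onto the y-axis contains that of `R₁`. -/
def Pierces (R₂ R₁ : Set Pt) : Prop :=
  Prod.fst '' R₂ ⊆ Prod.fst '' R₁ ∧ Prod.snd '' R₁ ⊆ Prod.snd '' R₂

/-- Two rectangles have a piercing intersection if one of them pierces the other. -/
def PiercingInter (A B : Set Pt) : Prop := Pierces A B ∨ Pierces B A

/-- The four corner points of an axis-aligned rectangle given as a set. -/
def corners (A : Set Pt) : Set Pt :=
  {c | (c.1 = sInf (Prod.fst '' A) ∨ c.1 = sSup (Prod.fst '' A)) ∧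
       (c.2 = sInf (Prod.snd '' A) ∨ c.2 = sSup (Prod.snd '' A))}

/-- `A` and `B` have a corner intersection (w.r.t. the point set `P`):
each rectangle contains exactly one of the corner points of the other,
and these two contained corners are not elements of `P`. -/
def CornerInter (P : Set Pt) (A B : Set Pt) : Prop :=
  (∃! c, c ∈ corners B ∧ c ∈ A) ∧ (∃! c, c ∈ corners A ∧ c ∈ B) ∧
  ∀ c, ((c ∈ corners B ∧ c ∈ A) ∨ (c ∈ corners A ∧ c ∈ B)) → c ∉ P

/-- `A` and `B` have a point intersection: their intersection is precisely
a single point of `P`. -/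
def PointInter (P : Set Pt) (A B : Set Pt) : Prop := ∃ s ∈ P, A ∩ B = {s}

/-- `A` is a rectangle on the point set `P`. -/
def IsRectOn (P : Set Pt) (A : Set Pt) : Prop :=
  ∃ a b, a ∈ P ∧ b ∈ P ∧ a ≠ b ∧ A = D a b ∧ A ∩ P = {a, b}

/-- A complete set of rectangles on `P`: for every two elements `D a b`, `D a' b'`
of `H` that have a corner intersection, the other two rectangles of the form
`D p q` (with `p ∈ {a,a'}`, `q ∈ {b,b'}`) having a piercing intersection with
each other also belong to `H`. -/
def CompleteOn (P : Set Pt) (H : Set (Set Pt)) : Prop :=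
  (∀ A ∈ H, IsRectOn P A) ∧
  ∀ a b a' b' : Pt, a ∈ P → b ∈ P → a' ∈ P → b' ∈ P →
    D a b ∈ H → D a' b' ∈ H → CornerInter P (D a b) (D a' b') →
    PiercingInter (D a b') (D a' b) →
    D a b' ∈ H ∧ D a' b ∈ H

/-- Adjacency in the graph `G_{p,c}(H)` : a piercing or a corner intersection. -/
def AdjPC (P : Set Pt) (A B : Set Pt) : Prop := PiercingInter A B ∨ CornerInter P A B

/-- `I` is an independent set of the graph `G_{p,c}(H)`. -/
def IndepPC (P : Set Pt) (H I : Set (Set Pt)) : Prop :=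
  I ⊆ H ∧ I.Pairwise fun A B => ¬ AdjPC P A B

/-- The maximum size of an independent set of the graph `G_{p,c}(H)`. -/
noncomputable def maxIndepPC (P : Set Pt) (H : Set (Set Pt)) : ℕ :=
  sSup {n | ∃ I, IndepPC P H I ∧ I.ncard = n}

/-- The family `𝓡(S)` of monochromatic rectangles of the two-colored point set
`S = R ∪ B`: rectangles `D p q` with `p,q` distinct points of the same color
containing no point of `S` other than `p` and `q`. -/
def RS (R B : Set Pt) : Set (Set Pt) :=
  {A | ∃ p q, ((p ∈ R ∧ q ∈ R) ∨ (p ∈ B ∧ q ∈ B)) ∧ p ≠ q ∧ A = D p q ∧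
    A ∩ (R ∪ B) = {p, q}}

/-- The blue rectangles of `𝓡(S)` having a point of `S` at their bottom-left corner. -/
def Fam1Blue (R B : Set Pt) : Set (Set Pt) :=
  {A | ∃ p q, p ∈ B ∧ q ∈ B ∧ p ≠ q ∧ A = D p q ∧ A ∩ (R ∪ B) = {p, q} ∧
    (min p.1 q.1, min p.2 q.2) ∈ R ∪ B}

/-- The red rectangles of `𝓡(S)` having a point of `S` at their bottom-right corner. -/
def Fam1Red (R B : Set Pt) : Set (Set Pt) :=
  {A | ∃ p q, p ∈ R ∧ q ∈ R ∧ p ≠ q ∧ A = D p q ∧ A ∩ (R ∪ B) = {p, q} ∧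
    (max p.1 q.1, min p.2 q.2) ∈ R ∪ B}

/-- The family `𝓡₁`. -/
def Fam1 (R B : Set Pt) : Set (Set Pt) := Fam1Blue R B ∪ Fam1Red R B

/-- The family `𝓡₂`: blue rectangles with a point of `S` at the bottom-right corner
together with red rectangles with a point of `S` at the bottom-left corner. -/
def Fam2 (R B : Set Pt) : Set (Set Pt) :=
  {A | ∃ p q, p ∈ B ∧ q ∈ B ∧ p ≠ q ∧ A = D p q ∧ A ∩ (R ∪ B) = {p, q} ∧
    (max p.1 q.1, min p.2 q.2) ∈ R ∪ B} ∪
  {A | ∃ p q, p ∈ R ∧ q ∈ R ∧ p ≠ q ∧ A = D p q ∧ A ∩ (R ∪ B) = {p, q} ∧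
    (min p.1 q.1, min p.2 q.2) ∈ R ∪ B}

/-- The maximum size of a subfamily of `H` consisting of pairwise-disjoint rectangles. -/
noncomputable def maxDisjoint (H : Set (Set Pt)) : ℕ :=
  sSup {n | ∃ I ⊆ H, I.Pairwise (fun A B => A ∩ B = ∅) ∧ I.ncard = n}

/-- The intersection graph of a family `H` of rectangles: two rectangles are
adjacent iff they are distinct and their intersection is nonempty. -/
def interGraph (H : Set (Set Pt)) : SimpleGraph H where
  Adj A B := A ≠ B ∧ ((A : Set Pt) ∩ (B : Set Pt)).Nonempty
  symm := by
    constructor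
    intro A B h
    exact ⟨h.1.symm, by rw [Set.inter_comm]; exact h.2⟩
  loopless := by
    constructor
    intro A h
    exact h.1 rfl


namespace Stmt7Aux

open Set

variable {Rv Bv : Set Pt}

/-- Canonical description of a rectangle of `Fam1`. -/
def Spec (Rv Bv : Set Pt) (X : Set Pt) (pp qq : Pt) (t : Bool) : Prop :=
  ∃ a1 a2 b1 b2 : ℝ, a1 ≤ a2 ∧ b1 ≤ b2 ∧ (a1 < a2 ∨ b1 < b2) ∧
    X = Icc a1 a2 ×ˢ Icc b1 b2 ∧
    X ∩ (Rv ∪ Bv) = {pp, qq} ∧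
    pp = (cond t a1 a2, b1) ∧ qq = (cond t a2 a1, b2) ∧
    pp ∈ cond t Bv Rv ∧ qq ∈ cond t Bv Rv

lemma cond_mem {α : Type*} (b : Bool) {s : Set α} {x y : α} (hx : x ∈ s) (hy : y ∈ s) :
    cond b x y ∈ s := by cases b <;> assumption

lemma color_sub (t : Bool) : (cond t Bv Rv : Set Pt) ⊆ Rv ∪ Bv := by
  cases t
  · exact subset_union_left
  · exact subset_union_right

lemma color_eq (hRB : Rv ∩ Bv = ∅) {s : Pt} {t t' : Bool}
    (h1 : s ∈ cond t Bv Rv) (h2 : s ∈ cond t' Bv Rv) : t = t' := by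
  cases t <;> cases t' <;> first
    | rfl
    | (exfalso; exact absurd (show s ∈ Rv ∩ Bv from ⟨by assumption, by assumption⟩)
        (by rw [hRB]; exact notMem_empty s))

lemma D_comm (a b : Pt) : D a b = D b a := by
  unfold D; rw [min_comm, max_comm, min_comm a.2, max_comm a.2]

lemma spec_exists {X : Set Pt} (h : X ∈ Fam1 Rv Bv) :
    ∃ pp qq t, Spec Rv Bv X pp qq t := by
  rcases h with h | h
  · obtain ⟨p, q, hpB, hqB, hpq, hA, hAS, hbl⟩ := h
    have hblA : (min p.1 q.1, min p.2 q.2) ∈ X := by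
      rw [hA]
      exact ⟨mem_Icc.2 ⟨le_rfl, min_le_max⟩, mem_Icc.2 ⟨le_rfl, min_le_max⟩⟩
    have : (min p.1 q.1, min p.2 q.2) ∈ ({p, q} : Set Pt) := by
      rw [← hAS]; exact ⟨hblA, hbl⟩
    have hnd : ∀ u v : Pt, u ≠ v → u.1 ≤ v.1 → u.2 ≤ v.2 → (u.1 < v.1 ∨ u.2 < v.2) := by
      intro u v huv h1 h2
      by_contra hcon
      push_neg at hcon
      exact huv (Prod.ext (le_antisymm h1 hcon.1) (le_antisymm h2 hcon.2))
    rcases this with h | h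
    · have hx : p.1 ≤ q.1 := min_eq_left_iff.mp (congrArg Prod.fst h)
      have hy : p.2 ≤ q.2 := min_eq_left_iff.mp (congrArg Prod.snd h)
      refine ⟨p, q, true, p.1, q.1, p.2, q.2, hx, hy, hnd p q hpq hx hy, ?_, hAS, ?_, ?_, hpB, hqB⟩
      · rw [hA]; unfold D
        rw [min_eq_left hx, max_eq_right hx, min_eq_left hy, max_eq_right hy]
      · simp
      · simp
    · have hx : q.1 ≤ p.1 := min_eq_right_iff.mp (congrArg Prod.fst h)
      have hy : q.2 ≤ p.2 := min_eq_right_iff.mp (congrArg Prod.snd h)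
      refine ⟨q, p, true, q.1, p.1, q.2, p.2, hx, hy, hnd q p (Ne.symm hpq) hx hy, ?_,
        by rw [hAS]; exact pair_comm p q, ?_, ?_, hqB, hpB⟩
      · rw [hA]; unfold D
        rw [min_eq_right hx, max_eq_left hx, min_eq_right hy, max_eq_left hy]
      · simp
      · simp
  · obtain ⟨p, q, hpR, hqR, hpq, hA, hAS, hbr⟩ := h
    have hbrA : (max p.1 q.1, min p.2 q.2) ∈ X := by
      rw [hA]
      exact ⟨mem_Icc.2 ⟨min_le_max, le_rfl⟩, mem_Icc.2 ⟨le_rfl, min_le_max⟩⟩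
    have : (max p.1 q.1, min p.2 q.2) ∈ ({p, q} : Set Pt) := by
      rw [← hAS]; exact ⟨hbrA, hbr⟩
    have hnd : ∀ u v : Pt, u ≠ v → v.1 ≤ u.1 → u.2 ≤ v.2 → (v.1 < u.1 ∨ u.2 < v.2) := by
      intro u v huv h1 h2
      by_contra hcon
      push_neg at hcon
      exact huv (Prod.ext (le_antisymm hcon.1 h1) (le_antisymm h2 hcon.2))
    rcases this with h | h
    · have hx : q.1 ≤ p.1 := max_eq_left_iff.mp (congrArg Prod.fst h)
      have hy : p.2 ≤ q.2 := min_eq_left_iff.mp (congrArg Prod.snd h)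
      refine ⟨p, q, false, q.1, p.1, p.2, q.2, hx, hy, hnd p q hpq hx hy, ?_, hAS, ?_, ?_, hpR, hqR⟩
      · rw [hA]; unfold D
        rw [min_eq_right hx, max_eq_left hx, min_eq_left hy, max_eq_right hy]
      · simp
      · simp
    · have hx : p.1 ≤ q.1 := max_eq_right_iff.mp (congrArg Prod.fst h)
      have hy : q.2 ≤ p.2 := min_eq_right_iff.mp (congrArg Prod.snd h)
      refine ⟨q, p, false, p.1, q.1, q.2, p.2, hx, hy, hnd q p (Ne.symm hpq) hx hy, ?_,
        by rw [hAS]; exact pair_comm p q, ?_, ?_, hqR, hpR⟩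
      · rw [hA]; unfold D
        rw [min_eq_left hx, max_eq_right hx, min_eq_right hy, max_eq_left hy]
      · simp
      · simp

lemma spec_ne {X pp qq t} (h : Spec Rv Bv X pp qq t) : pp ≠ qq := by
  obtain ⟨a1, a2, b1, b2, hx, hy, hnd, hXA, hSA, hpp, hqq, hcp, hcq⟩ := h
  intro he
  rw [hpp, hqq, Prod.mk.injEq] at he
  obtain ⟨h1, h2⟩ := he
  cases t <;> simp at h1 <;> rcases hnd with h | h <;> linarith

lemma spec_D {X pp qq t} (h : Spec Rv Bv X pp qq t) : X = D pp qq := by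
  obtain ⟨a1, a2, b1, b2, hx, hy, hnd, hXA, hSA, hpp, hqq, hcp, hcq⟩ := h
  rw [hXA, hpp, hqq]
  cases t <;> unfold D <;> dsimp only [cond_true, cond_false]
  · rw [min_comm, max_comm, min_eq_left hx, max_eq_right hx, min_eq_left hy, max_eq_right hy]
  · rw [min_eq_left hx, max_eq_right hx, min_eq_left hy, max_eq_right hy]

/-- potential function -/
def phi (t : Bool) (s : Pt) : ℝ := cond t (s.1 + s.2) (s.2 - s.1)

lemma spec_phi {X pp qq t} (h : Spec Rv Bv X pp qq t) : phi t pp < phi t qq := by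
  obtain ⟨a1, a2, b1, b2, hx, hy, hnd, hXA, hSA, hpp, hqq, hcp, hcq⟩ := h
  rw [hpp, hqq]
  cases t <;> simp [phi] <;> rcases hnd with h | h <;> linarith

lemma spec_pp_mem {X pp qq t} (h : Spec Rv Bv X pp qq t) : pp ∈ X := by
  obtain ⟨a1, a2, b1, b2, hx, hy, hnd, hXA, hSA, hpp, hqq, hcp, hcq⟩ := h
  rw [hXA, hpp]
  exact ⟨cond_mem t (mem_Icc.2 ⟨le_rfl, hx⟩) (mem_Icc.2 ⟨hx, le_rfl⟩), mem_Icc.2 ⟨le_rfl, hy⟩⟩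

lemma spec_qq_mem {X pp qq t} (h : Spec Rv Bv X pp qq t) : qq ∈ X := by
  obtain ⟨a1, a2, b1, b2, hx, hy, hnd, hXA, hSA, hpp, hqq, hcp, hcq⟩ := h
  rw [hXA, hqq]
  exact ⟨cond_mem t (mem_Icc.2 ⟨hx, le_rfl⟩) (mem_Icc.2 ⟨le_rfl, hx⟩), mem_Icc.2 ⟨hy, le_rfl⟩⟩

lemma spec_mem_S {X pp qq t} (h : Spec Rv Bv X pp qq t) {s : Pt} (hs : s ∈ X ∩ (Rv ∪ Bv)) :
    s = pp ∨ s = qq := by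
  obtain ⟨a1, a2, b1, b2, hx, hy, hnd, hXA, hSA, hpp, hqq, hcp, hcq⟩ := h
  rw [hSA] at hs
  exact hs

end Stmt7Aux

namespace Stmt7Aux

open Set

lemma prodIcc_inter (a1 a2 b1 b2 c1 c2 d1 d2 : ℝ) :
    (Icc a1 a2 ×ˢ Icc b1 b2 : Set Pt) ∩ (Icc c1 c2 ×ˢ Icc d1 d2) =
      Icc (max a1 c1) (min a2 c2) ×ˢ Icc (max b1 d1) (min b2 d2) := by
  rw [prod_inter_prod, Icc_inter_Icc, Icc_inter_Icc]

lemma pierces_of {a1 a2 b1 b2 c1 c2 d1 d2 : ℝ}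
    (hx : a1 ≤ a2) (hy : b1 ≤ b2) (hx' : c1 ≤ c2) (hy' : d1 ≤ d2)
    (h1 : c1 ≤ a1) (h2 : a2 ≤ c2) (h3 : b1 ≤ d1) (h4 : d2 ≤ b2) :
    Pierces (Icc a1 a2 ×ˢ Icc b1 b2 : Set Pt) (Icc c1 c2 ×ˢ Icc d1 d2) := by
  constructor
  · rw [fst_image_prod _ (nonempty_Icc.2 hy), fst_image_prod _ (nonempty_Icc.2 hy')]
    exact Icc_subset_Icc h1 h2
  · rw [snd_image_prod (nonempty_Icc.2 hx) _, snd_image_prod (nonempty_Icc.2 hx') _]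
    exact Icc_subset_Icc h3 h4

lemma sub_of {a1 a2 b1 b2 c1 c2 d1 d2 : ℝ}
    (h1 : c1 ≤ a1) (h2 : a2 ≤ c2) (h3 : d1 ≤ b1) (h4 : b2 ≤ d2) :
    (Icc a1 a2 ×ˢ Icc b1 b2 : Set Pt) ⊆ Icc c1 c2 ×ˢ Icc d1 d2 :=
  prod_mono (Icc_subset_Icc h1 h2) (Icc_subset_Icc h3 h4)

lemma corners_prod {a1 a2 b1 b2 : ℝ} (hx : a1 ≤ a2) (hy : b1 ≤ b2) :
    corners (Icc a1 a2 ×ˢ Icc b1 b2 : Set Pt) =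
      {c : Pt | (c.1 = a1 ∨ c.1 = a2) ∧ (c.2 = b1 ∨ c.2 = b2)} := by
  unfold corners
  rw [fst_image_prod _ (nonempty_Icc.2 hy), snd_image_prod (nonempty_Icc.2 hx) _,
    csInf_Icc hx, csSup_Icc hx, csInf_Icc hy, csSup_Icc hy]

variable {Rv Bv : Set Pt}

lemma nested_contra (hRB : Rv ∩ Bv = ∅) {X Y : Set Pt} {pp qq pp' qq' : Pt} {t t' : Bool}
    (hX : Spec Rv Bv X pp qq t) (hY : Spec Rv Bv Y pp' qq' t')
    (hne : X ≠ Y) (hsub : X ⊆ Y) : False := by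
  have hppS : pp ∈ Rv ∪ Bv := by
    obtain ⟨a1, a2, b1, b2, hx, hy, hnd, hXA, hSA, hpp, hqq, hcp, hcq⟩ := hX
    exact color_sub t hcp
  have hqqS : qq ∈ Rv ∪ Bv := by
    obtain ⟨a1, a2, b1, b2, hx, hy, hnd, hXA, hSA, hpp, hqq, hcp, hcq⟩ := hX
    exact color_sub t hcq
  have h1 := spec_mem_S hY ⟨hsub (spec_pp_mem hX), hppS⟩
  have h2 := spec_mem_S hY ⟨hsub (spec_qq_mem hX), hqqS⟩
  have hD : X = D pp qq := spec_D hX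
  have hD' : Y = D pp' qq' := spec_D hY
  have hnepq := spec_ne hX
  rcases h1 with h1 | h1 <;> rcases h2 with h2 | h2
  · exact hnepq (h1.trans h2.symm)
  · exact hne (by rw [hD, hD', h1, h2])
  · exact hne (by rw [hD, hD', h1, h2, D_comm])
  · exact hnepq (h1.trans h2.symm)

lemma role_low (hRB : Rv ∩ Bv = ∅) {X Y : Set Pt} {pp qq pp' qq' : Pt} {t t' : Bool}
    (hX : Spec Rv Bv X pp qq t) (hY : Spec Rv Bv Y pp' qq' t')
    (hne : X ≠ Y) (hNP : ¬ PiercingInter X Y) (he : pp = pp') : False := by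
  obtain ⟨a1, a2, b1, b2, hx, hy, hnd, hXA, hSA, hpp, hqq, hcp, hcq⟩ := hX
  obtain ⟨c1, c2, d1, d2, hx', hy', hnd', hXA', hSA', hpp', hqq', hcp', hcq'⟩ := hY
  have ht : t = t' := color_eq hRB hcp (he ▸ hcp')
  subst ht
  rw [hpp, hpp', Prod.mk.injEq] at he
  obtain ⟨h1, h2⟩ := he
  have hXs : Spec Rv Bv X pp qq t :=
    ⟨a1, a2, b1, b2, hx, hy, hnd, hXA, hSA, hpp, hqq, hcp, hcq⟩
  have hYs : Spec Rv Bv Y pp' qq' t :=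
    ⟨c1, c2, d1, d2, hx', hy', hnd', hXA', hSA', hpp', hqq', hcp', hcq'⟩
  cases t <;> simp only [Bool.cond_true, Bool.cond_false] at h1
  · -- red : pp = (a2,b1) = (c2,d1)
    rcases le_total a1 c1 with h3 | h3 <;> rcases le_total b2 d2 with h4 | h4
    · exact hNP (Or.inr (by rw [hXA, hXA']; exact pierces_of hx' hy' hx hy (by linarith) (by linarith) (by linarith) (by linarith)))
    · exact nested_contra hRB hYs hXs (Ne.symm hne) (by rw [hXA, hXA']; exact sub_of (by linarith) (by linarith) (by linarith) (by linarith))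
    · exact nested_contra hRB hXs hYs hne (by rw [hXA, hXA']; exact sub_of (by linarith) (by linarith) (by linarith) (by linarith))
    · exact hNP (Or.inl (by rw [hXA, hXA']; exact pierces_of hx hy hx' hy' (by linarith) (by linarith) (by linarith) (by linarith)))
  · -- blue : pp = (a1,b1) = (c1,d1)
    rcases le_total a2 c2 with h3 | h3 <;> rcases le_total b2 d2 with h4 | h4
    · exact nested_contra hRB hXs hYs hne (by rw [hXA, hXA']; exact sub_of (by linarith) (by linarith) (by linarith) (by linarith))
    · exact hNP (Or.inl (by rw [hXA, hXA']; exact pierces_of hx hy hx' hy' (by linarith) (by linarith) (by linarith) (by linarith)))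
    · exact hNP (Or.inr (by rw [hXA, hXA']; exact pierces_of hx' hy' hx hy (by linarith) (by linarith) (by linarith) (by linarith)))
    · exact nested_contra hRB hYs hXs (Ne.symm hne) (by rw [hXA, hXA']; exact sub_of (by linarith) (by linarith) (by linarith) (by linarith))

lemma role_high (hRB : Rv ∩ Bv = ∅) {X Y : Set Pt} {pp qq pp' qq' : Pt} {t t' : Bool}
    (hX : Spec Rv Bv X pp qq t) (hY : Spec Rv Bv Y pp' qq' t')
    (hne : X ≠ Y) (hNP : ¬ PiercingInter X Y) (he : qq = qq') : False := by
  obtain ⟨a1, a2, b1, b2, hx, hy, hnd, hXA, hSA, hpp, hqq, hcp, hcq⟩ := hX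
  obtain ⟨c1, c2, d1, d2, hx', hy', hnd', hXA', hSA', hpp', hqq', hcp', hcq'⟩ := hY
  have ht : t = t' := color_eq hRB hcq (he ▸ hcq')
  subst ht
  rw [hqq, hqq', Prod.mk.injEq] at he
  obtain ⟨h1, h2⟩ := he
  have hXs : Spec Rv Bv X pp qq t :=
    ⟨a1, a2, b1, b2, hx, hy, hnd, hXA, hSA, hpp, hqq, hcp, hcq⟩
  have hYs : Spec Rv Bv Y pp' qq' t :=
    ⟨c1, c2, d1, d2, hx', hy', hnd', hXA', hSA', hpp', hqq', hcp', hcq'⟩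
  cases t <;> simp only [Bool.cond_true, Bool.cond_false] at h1
  · -- red : qq = (a1,b2) = (c1,d2)
    rcases le_total a2 c2 with h3 | h3 <;> rcases le_total b1 d1 with h4 | h4
    · exact hNP (Or.inl (by rw [hXA, hXA']; exact pierces_of hx hy hx' hy' (by linarith) (by linarith) (by linarith) (by linarith)))
    · exact nested_contra hRB hXs hYs hne (by rw [hXA, hXA']; exact sub_of (by linarith) (by linarith) (by linarith) (by linarith))
    · exact nested_contra hRB hYs hXs (Ne.symm hne) (by rw [hXA, hXA']; exact sub_of (by linarith) (by linarith) (by linarith) (by linarith))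
    · exact hNP (Or.inr (by rw [hXA, hXA']; exact pierces_of hx' hy' hx hy (by linarith) (by linarith) (by linarith) (by linarith)))
  · -- blue : qq = (a2,b2) = (c2,d2)
    rcases le_total a1 c1 with h3 | h3 <;> rcases le_total b1 d1 with h4 | h4
    · exact nested_contra hRB hYs hXs (Ne.symm hne) (by rw [hXA, hXA']; exact sub_of (by linarith) (by linarith) (by linarith) (by linarith))
    · exact hNP (Or.inr (by rw [hXA, hXA']; exact pierces_of hx' hy' hx hy (by linarith) (by linarith) (by linarith) (by linarith)))
    · exact hNP (Or.inl (by rw [hXA, hXA']; exact pierces_of hx hy hx' hy' (by linarith) (by linarith) (by linarith) (by linarith)))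
    · exact nested_contra hRB hXs hYs hne (by rw [hXA, hXA']; exact sub_of (by linarith) (by linarith) (by linarith) (by linarith))

lemma no_three (hRB : Rv ∩ Bv = ∅) {X Y Z : Set Pt}
    {pp qq pp' qq' pp'' qq'' : Pt} {t t' t'' : Bool}
    (hX : Spec Rv Bv X pp qq t) (hY : Spec Rv Bv Y pp' qq' t') (hZ : Spec Rv Bv Z pp'' qq'' t'')
    (hXY : X ≠ Y) (hXZ : X ≠ Z) (hYZ : Y ≠ Z)
    (hNPxy : ¬ PiercingInter X Y) (hNPxz : ¬ PiercingInter X Z) (hNPyz : ¬ PiercingInter Y Z)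
    {s : Pt} (h1 : s = pp ∨ s = qq) (h2 : s = pp' ∨ s = qq') (h3 : s = pp'' ∨ s = qq'') :
    False := by
  rcases h1 with h1 | h1 <;> rcases h2 with h2 | h2 <;> rcases h3 with h3 | h3
  · exact role_low hRB hX hY hXY hNPxy (h1.symm.trans h2)
  · exact role_low hRB hX hY hXY hNPxy (h1.symm.trans h2)
  · exact role_low hRB hX hZ hXZ hNPxz (h1.symm.trans h3)
  · exact role_high hRB hY hZ hYZ hNPyz (h2.symm.trans h3)
  · exact role_low hRB hY hZ hYZ hNPyz (h2.symm.trans h3)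
  · exact role_high hRB hX hZ hXZ hNPxz (h1.symm.trans h3)
  · exact role_high hRB hX hY hXY hNPxy (h1.symm.trans h2)
  · exact role_high hRB hX hY hXY hNPxy (h1.symm.trans h2)

end Stmt7Aux

namespace Stmt7Aux

open Set

variable {Rv Bv : Set Pt}

lemma col_contra (hRB : Rv ∩ Bv = ∅) {s : Pt} (h1 : s ∈ Rv) (h2 : s ∈ Bv) : False :=
  absurd (show s ∈ Rv ∩ Bv from ⟨h1, h2⟩) (by rw [hRB]; exact notMem_empty s)

/-- The key geometric lemma, with WLOG `a1 ≤ c1`. -/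
lemma L1core (hRB : Rv ∩ Bv = ∅)
    {a1 a2 b1 b2 c1 c2 d1 d2 : ℝ} {t t' : Bool} {pp qq pp' qq' : Pt}
    (hx : a1 ≤ a2) (hy : b1 ≤ b2) (hx' : c1 ≤ c2) (hy' : d1 ≤ d2)
    (hnd : a1 < a2 ∨ b1 < b2) (hnd' : c1 < c2 ∨ d1 < d2)
    (hSA : (Icc a1 a2 ×ˢ Icc b1 b2 : Set Pt) ∩ (Rv ∪ Bv) = {pp, qq})
    (hpp : pp = (cond t a1 a2, b1)) (hqq : qq = (cond t a2 a1, b2))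
    (hcp : pp ∈ cond t Bv Rv) (hcq : qq ∈ cond t Bv Rv)
    (hSA' : (Icc c1 c2 ×ˢ Icc d1 d2 : Set Pt) ∩ (Rv ∪ Bv) = {pp', qq'})
    (hpp' : pp' = (cond t' c1 c2, d1)) (hqq' : qq' = (cond t' c2 c1, d2))
    (hcp' : pp' ∈ cond t' Bv Rv) (hcq' : qq' ∈ cond t' Bv Rv)
    (hne : (Icc a1 a2 ×ˢ Icc b1 b2 : Set Pt) ≠ Icc c1 c2 ×ˢ Icc d1 d2)
    (hNP : ¬ PiercingInter (Icc a1 a2 ×ˢ Icc b1 b2 : Set Pt) (Icc c1 c2 ×ˢ Icc d1 d2))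
    (hNC : ¬ CornerInter (Rv ∪ Bv) (Icc a1 a2 ×ˢ Icc b1 b2 : Set Pt) (Icc c1 c2 ×ˢ Icc d1 d2))
    (hL : a1 ≤ c1) (hxx : max a1 c1 ≤ min a2 c2) (hyy : max b1 d1 ≤ min b2 d2) :
    ∃ s ∈ Rv ∪ Bv,
      (Icc a1 a2 ×ˢ Icc b1 b2 : Set Pt) ∩ (Icc c1 c2 ×ˢ Icc d1 d2) = {s} := by
  have hca : c1 ≤ a2 := le_trans (le_max_right a1 c1) (hxx.trans (min_le_left a2 c2))
  have hac : a1 ≤ c2 := le_trans (le_max_left a1 c1) (hxx.trans (min_le_right a2 c2))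
  have hdb : d1 ≤ b2 := le_trans (le_max_right b1 d1) (hyy.trans (min_le_left b2 d2))
  have hbd : b1 ≤ d2 := le_trans (le_max_left b1 d1) (hyy.trans (min_le_right b2 d2))
  have hXs : Spec Rv Bv (Icc a1 a2 ×ˢ Icc b1 b2) pp qq t :=
    ⟨a1, a2, b1, b2, hx, hy, hnd, rfl, hSA, hpp, hqq, hcp, hcq⟩
  have hYs : Spec Rv Bv (Icc c1 c2 ×ˢ Icc d1 d2) pp' qq' t' :=
    ⟨c1, c2, d1, d2, hx', hy', hnd', rfl, hSA', hpp', hqq', hcp', hcq'⟩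
  have hIeq : (Icc a1 a2 ×ˢ Icc b1 b2 : Set Pt) ∩ (Icc c1 c2 ×ˢ Icc d1 d2) =
      Icc (max a1 c1) (min a2 c2) ×ˢ Icc (max b1 d1) (min b2 d2) :=
    prodIcc_inter a1 a2 b1 b2 c1 c2 d1 d2
  have out : ∀ u v : ℝ, ((u, v) : Pt) ∈ Rv ∪ Bv →
      max a1 c1 = u → min a2 c2 = u → max b1 d1 = v → min b2 d2 = v →
      ∃ s ∈ Rv ∪ Bv,
        (Icc a1 a2 ×ˢ Icc b1 b2 : Set Pt) ∩ (Icc c1 c2 ×ˢ Icc d1 d2) = {s} := by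
    intro u v hs e1 e2 e3 e4
    refine ⟨(u, v), hs, ?_⟩
    rw [hIeq, e1, e2, e3, e4, Icc_self, Icc_self, singleton_prod_singleton]
  rcases le_or_gt c2 a2 with hI | hII
  · -- CASE I : X' ⊆ X horizontally
    rcases le_total d1 b1 with hyc | hyc <;> rcases le_total d2 b2 with hyd | hyd
    · -- I.4 : d1 ≤ b1, d2 ≤ b2
      rcases le_or_gt b2 d2 with hbb | hbb
      · exact absurd (Or.inr (pierces_of hx' hy' hx hy hL hI hyc hbb)) hNP
      · -- d2 < b2 ; the high point qq' of Y lies in X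
        have hm : qq' ∈ (Icc a1 a2 ×ˢ Icc b1 b2 : Set Pt) ∩ (Rv ∪ Bv) :=
          ⟨by rw [hqq']
              exact ⟨cond_mem t' (mem_Icc.2 ⟨hac, hI⟩) (mem_Icc.2 ⟨hL, hca⟩),
                mem_Icc.2 ⟨hbd, hbb.le⟩⟩, color_sub t' hcq'⟩
        rcases spec_mem_S hXs hm with h | h
        · have h2' : qq' ∈ cond t Bv Rv := by rw [h]; exact hcp
          have ht : t' = t := color_eq hRB hcq' h2'
          subst ht
          rw [hqq', hpp, Prod.mk.injEq] at h
          obtain ⟨h1, h2⟩ := h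
          cases t' <;> simp only [Bool.cond_true, Bool.cond_false] at h1 hpp hqq hcp hcq
          · -- red, c1 = a2
            refine out a2 b1 (by rw [← hpp]; exact color_sub false hcp) ?_ ?_ ?_ ?_
            · exact (max_eq_right hL).trans h1
            · exact min_eq_left (by linarith)
            · exact max_eq_left (by linarith)
            · exact (min_eq_right (by linarith)).trans h2
          · -- blue, c2 = a1
            refine out a1 b1 (by rw [← hpp]; exact color_sub true hcp) ?_ ?_ ?_ ?_
            · exact max_eq_left (by linarith)
            · exact (min_eq_right (by linarith)).trans h1
            · exact max_eq_left (by linarith)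
            · exact (min_eq_right (by linarith)).trans h2
        · rw [hqq', hqq, Prod.mk.injEq] at h
          obtain ⟨h1, h2⟩ := h
          linarith
    · -- I.1 : d1 ≤ b1, b2 ≤ d2 : piercing
      exact absurd (Or.inr (pierces_of hx' hy' hx hy hL hI hyc hyd)) hNP
    · -- I.2 : b1 ≤ d1, d2 ≤ b2 : Y ⊆ X
      exact absurd (nested_contra hRB hYs hXs (Ne.symm hne) (sub_of hL hI hyc hyd)) id
    · -- I.3 : b1 ≤ d1, b2 ≤ d2
      rcases le_or_gt d1 b1 with hbb | hbb
      · exact absurd (Or.inr (pierces_of hx' hy' hx hy hL hI hbb hyd)) hNP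
      · -- b1 < d1 ; the low point pp' of Y lies in X
        have hm : pp' ∈ (Icc a1 a2 ×ˢ Icc b1 b2 : Set Pt) ∩ (Rv ∪ Bv) :=
          ⟨by rw [hpp']
              exact ⟨cond_mem t' (mem_Icc.2 ⟨hL, hca⟩) (mem_Icc.2 ⟨hac, hI⟩),
                mem_Icc.2 ⟨hbb.le, hdb⟩⟩, color_sub t' hcp'⟩
        rcases spec_mem_S hXs hm with h | h
        · rw [hpp', hpp, Prod.mk.injEq] at h
          obtain ⟨h1, h2⟩ := h
          linarith
        · have h2' : pp' ∈ cond t Bv Rv := by rw [h]; exact hcq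
          have ht : t' = t := color_eq hRB hcp' h2'
          subst ht
          rw [hpp', hqq, Prod.mk.injEq] at h
          obtain ⟨h1, h2⟩ := h
          cases t' <;> simp only [Bool.cond_true, Bool.cond_false] at h1 hpp hqq hcp hcq
          · -- red, c2 = a1
            refine out a1 b2 (by rw [← hqq]; exact color_sub false hcq) ?_ ?_ ?_ ?_
            · exact max_eq_left (by linarith)
            · exact (min_eq_right (by linarith)).trans h1
            · exact (max_eq_right (by linarith)).trans h2
            · exact min_eq_left (by linarith)
          · -- blue, c1 = a2
            refine out a2 b2 (by rw [← hqq]; exact color_sub true hcq) ?_ ?_ ?_ ?_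
            · exact (max_eq_right hL).trans h1
            · exact min_eq_left (by linarith)
            · exact (max_eq_right (by linarith)).trans h2
            · exact min_eq_left (by linarith)
  · -- CASE II : a2 < c2
    rcases le_total d1 b1 with hyc | hyc <;> rcases le_total d2 b2 with hyd | hyd
    · -- II.4 : d1 ≤ b1, d2 ≤ b2
      rcases le_or_gt c1 a1 with hc | hlt
      · -- sub-a : c1 ≤ a1, the low point pp of X lies in Y
        cases t <;> simp only [Bool.cond_true, Bool.cond_false] at hpp hqq hcp hcq
        · -- t = false : pp = (a2, b1)
          have hm : pp ∈ (Icc c1 c2 ×ˢ Icc d1 d2 : Set Pt) ∩ (Rv ∪ Bv) :=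
            ⟨by rw [hpp]; exact ⟨mem_Icc.2 ⟨hca, hII.le⟩, mem_Icc.2 ⟨hyc, hbd⟩⟩,
              color_sub false hcp⟩
          rcases spec_mem_S hYs hm with h | h
          · cases t' <;> simp only [Bool.cond_true, Bool.cond_false] at hpp' hcp'
            · rw [hpp, hpp', Prod.mk.injEq] at h
              obtain ⟨h1, h2⟩ := h
              linarith
            · exact absurd (col_contra hRB hcp (by rw [h]; exact hcp')) id
          · cases t' <;> simp only [Bool.cond_true, Bool.cond_false] at hqq' hcq'
            · rw [hpp, hqq', Prod.mk.injEq] at h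
              obtain ⟨h1, h2⟩ := h
              refine out a2 b1 (by rw [← hpp]; exact color_sub false hcp) ?_ ?_ ?_ ?_
              · exact (max_eq_right hL).trans h1.symm
              · exact min_eq_left hII.le
              · exact max_eq_left hyc
              · exact (min_eq_right hyd).trans h2.symm
            · exact absurd (col_contra hRB hcp (by rw [h]; exact hcq')) id
        · -- t = true : pp = (a1, b1)
          have hm : pp ∈ (Icc c1 c2 ×ˢ Icc d1 d2 : Set Pt) ∩ (Rv ∪ Bv) :=
            ⟨by rw [hpp]; exact ⟨mem_Icc.2 ⟨hc, hac⟩, mem_Icc.2 ⟨hyc, hbd⟩⟩,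
              color_sub true hcp⟩
          rcases spec_mem_S hYs hm with h | h
          · cases t' <;> simp only [Bool.cond_true, Bool.cond_false] at hpp' hcp'
            · exact absurd (col_contra hRB (by rw [h]; exact hcp') hcp) id
            · rw [hpp, hpp', Prod.mk.injEq] at h
              obtain ⟨h1, h2⟩ := h
              exact absurd (Or.inl (pierces_of hx hy hx' hy' hc hII.le h2.le hyd)) hNP
          · cases t' <;> simp only [Bool.cond_true, Bool.cond_false] at hqq' hcq'
            · exact absurd (col_contra hRB (by rw [h]; exact hcq') hcp) id
            · rw [hpp, hqq', Prod.mk.injEq] at h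
              obtain ⟨h1, h2⟩ := h
              linarith
      · -- a1 < c1
        rcases le_or_gt b2 d2 with he | he
        · -- shared top : d2 = b2
          cases t' <;> simp only [Bool.cond_true, Bool.cond_false] at hpp' hqq' hcp' hcq'
          · -- t' = false : qq' = (c1, d2) ∈ X
            have hm : qq' ∈ (Icc a1 a2 ×ˢ Icc b1 b2 : Set Pt) ∩ (Rv ∪ Bv) :=
              ⟨by rw [hqq']; exact ⟨mem_Icc.2 ⟨hL, hca⟩, mem_Icc.2 ⟨by linarith, hyd⟩⟩,
                color_sub false hcq'⟩
            rcases spec_mem_S hXs hm with h | h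
            · cases t <;> simp only [Bool.cond_true, Bool.cond_false] at hpp hcp
              · rw [hqq', hpp, Prod.mk.injEq] at h
                obtain ⟨h1, h2⟩ := h
                refine out a2 b1 (by rw [← hpp]; exact color_sub false hcp) ?_ ?_ ?_ ?_
                · exact (max_eq_right hL).trans h1
                · exact min_eq_left hII.le
                · exact max_eq_left hyc
                · exact (min_eq_right hyd).trans h2
              · rw [hqq', hpp, Prod.mk.injEq] at h
                obtain ⟨h1, h2⟩ := h
                linarith
            · cases t <;> simp only [Bool.cond_true, Bool.cond_false] at hqq hcq
              · rw [hqq', hqq, Prod.mk.injEq] at h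
                obtain ⟨h1, h2⟩ := h
                linarith
              · exact absurd (col_contra hRB hcq' (by rw [h]; exact hcq)) id
          · -- t' = true : use the points of X inside Y
            cases t <;> simp only [Bool.cond_true, Bool.cond_false] at hpp hqq hcp hcq
            · -- t = false : pp = (a2, b1) ∈ Y
              have hm : pp ∈ (Icc c1 c2 ×ˢ Icc d1 d2 : Set Pt) ∩ (Rv ∪ Bv) :=
                ⟨by rw [hpp]; exact ⟨mem_Icc.2 ⟨hca, hII.le⟩, mem_Icc.2 ⟨hyc, hbd⟩⟩,
                  color_sub false hcp⟩
              rcases spec_mem_S hYs hm with h | h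
              · exact absurd (col_contra hRB hcp (by rw [h]; exact hcp')) id
              · rw [hpp, hqq', Prod.mk.injEq] at h
                obtain ⟨h1, h2⟩ := h
                linarith
            · -- t = true : qq = (a2, b2) ∈ Y
              have hm : qq ∈ (Icc c1 c2 ×ˢ Icc d1 d2 : Set Pt) ∩ (Rv ∪ Bv) :=
                ⟨by rw [hqq]; exact ⟨mem_Icc.2 ⟨hca, hII.le⟩, mem_Icc.2 ⟨hdb, he⟩⟩,
                  color_sub true hcq⟩
              rcases spec_mem_S hYs hm with h | h
              · rw [hqq, hpp', Prod.mk.injEq] at h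
                obtain ⟨h1, h2⟩ := h
                refine out a2 b2 (by rw [← hqq]; exact color_sub true hcq) ?_ ?_ ?_ ?_
                · exact (max_eq_right hL).trans h1.symm
                · exact min_eq_left hII.le
                · exact (max_eq_right (by linarith)).trans h2.symm
                · exact min_eq_left he
              · rw [hqq, hqq', Prod.mk.injEq] at h
                obtain ⟨h1, h2⟩ := h
                linarith
        · -- d2 < b2
          rcases le_or_gt b1 d1 with hd | hd
          · -- shared bottom : d1 = b1
            cases t' <;> simp only [Bool.cond_true, Bool.cond_false] at hpp' hqq' hcp' hcq'
            · -- t' = false : qq' = (c1, d2) ∈ X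
              have hm : qq' ∈ (Icc a1 a2 ×ˢ Icc b1 b2 : Set Pt) ∩ (Rv ∪ Bv) :=
                ⟨by rw [hqq']; exact ⟨mem_Icc.2 ⟨hL, hca⟩, mem_Icc.2 ⟨by linarith, he.le⟩⟩,
                  color_sub false hcq'⟩
              rcases spec_mem_S hXs hm with h | h
              · cases t <;> simp only [Bool.cond_true, Bool.cond_false] at hpp hcp
                · rw [hqq', hpp, Prod.mk.injEq] at h
                  obtain ⟨h1, h2⟩ := h
                  refine out a2 b1 (by rw [← hpp]; exact color_sub false hcp) ?_ ?_ ?_ ?_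
                  · exact (max_eq_right hL).trans h1
                  · exact min_eq_left hII.le
                  · exact max_eq_left (by linarith)
                  · exact (min_eq_right he.le).trans h2
                · rw [hqq', hpp, Prod.mk.injEq] at h
                  obtain ⟨h1, h2⟩ := h
                  linarith
              · cases t <;> simp only [Bool.cond_true, Bool.cond_false] at hqq hcq <;>
                  · rw [hqq', hqq, Prod.mk.injEq] at h
                    obtain ⟨h1, h2⟩ := h
                    linarith
            · -- t' = true : pp' = (c1, d1) ∈ X
              have hm : pp' ∈ (Icc a1 a2 ×ˢ Icc b1 b2 : Set Pt) ∩ (Rv ∪ Bv) :=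
                ⟨by rw [hpp']; exact ⟨mem_Icc.2 ⟨hL, hca⟩, mem_Icc.2 ⟨hd, hdb⟩⟩,
                  color_sub true hcp'⟩
              rcases spec_mem_S hXs hm with h | h
              · cases t <;> simp only [Bool.cond_true, Bool.cond_false] at hpp hcp
                · exact absurd (col_contra hRB hcp (by rw [← h]; exact hcp')) id
                · rw [hpp', hpp, Prod.mk.injEq] at h
                  obtain ⟨h1, h2⟩ := h
                  linarith
              · cases t <;> simp only [Bool.cond_true, Bool.cond_false] at hqq hcq <;>
                  · rw [hpp', hqq, Prod.mk.injEq] at h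
                    obtain ⟨h1, h2⟩ := h
                    linarith
          · -- d1 < b1 : generic down-right overlap
            by_cases hs1 : ((c1, d2) : Pt) ∈ Rv ∪ Bv
            · have hm : ((c1, d2) : Pt) ∈ (Icc a1 a2 ×ˢ Icc b1 b2 : Set Pt) ∩ (Rv ∪ Bv) :=
                ⟨⟨mem_Icc.2 ⟨hL, hca⟩, mem_Icc.2 ⟨hbd, he.le⟩⟩, hs1⟩
              rcases spec_mem_S hXs hm with h | h
              · cases t <;> simp only [Bool.cond_true, Bool.cond_false] at hpp hcp
                · rw [hpp, Prod.mk.injEq] at h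
                  obtain ⟨h1, h2⟩ := h
                  refine out a2 b1 (by rw [← hpp]; exact color_sub false hcp) ?_ ?_ ?_ ?_
                  · exact (max_eq_right hL).trans h1
                  · exact min_eq_left hII.le
                  · exact max_eq_left hd.le
                  · exact (min_eq_right he.le).trans h2
                · rw [hpp, Prod.mk.injEq] at h
                  obtain ⟨h1, h2⟩ := h
                  linarith
              · cases t <;> simp only [Bool.cond_true, Bool.cond_false] at hqq hcq <;>
                  · rw [hqq, Prod.mk.injEq] at h
                    obtain ⟨h1, h2⟩ := h
                    linarith
            · by_cases hs2 : ((a2, b1) : Pt) ∈ Rv ∪ Bv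
              · have hm : ((a2, b1) : Pt) ∈ (Icc c1 c2 ×ˢ Icc d1 d2 : Set Pt) ∩ (Rv ∪ Bv) :=
                  ⟨⟨mem_Icc.2 ⟨hca, hII.le⟩, mem_Icc.2 ⟨hd.le, hbd⟩⟩, hs2⟩
                rcases spec_mem_S hYs hm with h | h
                · cases t' <;> simp only [Bool.cond_true, Bool.cond_false] at hpp' hcp' <;>
                    · rw [hpp', Prod.mk.injEq] at h
                      obtain ⟨h1, h2⟩ := h
                      linarith
                · cases t' <;> simp only [Bool.cond_true, Bool.cond_false] at hqq' hcq'
                  · rw [hqq', Prod.mk.injEq] at h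
                    obtain ⟨h1, h2⟩ := h
                    refine out a2 b1 hs2 ?_ ?_ ?_ ?_
                    · exact (max_eq_right hL).trans h1.symm
                    · exact min_eq_left hII.le
                    · exact max_eq_left hd.le
                    · exact (min_eq_right he.le).trans h2.symm
                  · rw [hqq', Prod.mk.injEq] at h
                    obtain ⟨h1, h2⟩ := h
                    linarith
              · -- corner intersection
                exfalso
                apply hNC
                have u1 : ∀ y : Pt, y ∈ corners (Icc c1 c2 ×ˢ Icc d1 d2 : Set Pt) →
                    y ∈ (Icc a1 a2 ×ˢ Icc b1 b2 : Set Pt) → y = ((c1, d2) : Pt) := by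
                  intro y hyc hyX
                  rw [corners_prod hx' hy'] at hyc
                  obtain ⟨hy1, hy2⟩ := hyc
                  obtain ⟨hm1, hm2⟩ := hyX
                  rw [mem_Icc] at hm1 hm2
                  have e1 : y.1 = c1 := by
                    rcases hy1 with h | h
                    · exact h
                    · exfalso; linarith [hm1.2]
                  have e2 : y.2 = d2 := by
                    rcases hy2 with h | h
                    · exfalso; linarith [hm2.1]
                    · exact h
                  exact Prod.ext e1 e2
                have u2 : ∀ y : Pt, y ∈ corners (Icc a1 a2 ×ˢ Icc b1 b2 : Set Pt) →
                    y ∈ (Icc c1 c2 ×ˢ Icc d1 d2 : Set Pt) → y = ((a2, b1) : Pt) := by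
                  intro y hyc hyX
                  rw [corners_prod hx hy] at hyc
                  obtain ⟨hy1, hy2⟩ := hyc
                  obtain ⟨hm1, hm2⟩ := hyX
                  rw [mem_Icc] at hm1 hm2
                  have e1 : y.1 = a2 := by
                    rcases hy1 with h | h
                    · exfalso; linarith [hm1.1]
                    · exact h
                  have e2 : y.2 = b1 := by
                    rcases hy2 with h | h
                    · exact h
                    · exfalso; linarith [hm2.2]
                  exact Prod.ext e1 e2
                refine ⟨⟨(c1, d2), ⟨?_, ?_⟩, fun y hy => u1 y hy.1 hy.2⟩,
                  ⟨(a2, b1), ⟨?_, ?_⟩, fun y hy => u2 y hy.1 hy.2⟩, ?_⟩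
                · rw [corners_prod hx' hy']; exact ⟨Or.inl rfl, Or.inr rfl⟩
                · exact ⟨mem_Icc.2 ⟨hL, hca⟩, mem_Icc.2 ⟨hbd, he.le⟩⟩
                · rw [corners_prod hx hy]; exact ⟨Or.inr rfl, Or.inl rfl⟩
                · exact ⟨mem_Icc.2 ⟨hca, hII.le⟩, mem_Icc.2 ⟨hd.le, hbd⟩⟩
                · intro c hc
                  rcases hc with hc | hc
                  · rw [u1 c hc.1 hc.2]; exact hs1
                  · rw [u2 c hc.1 hc.2]; exact hs2
    · -- II.1 : d1 ≤ b1, b2 ≤ d2 (Y contains X vertically)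
      rcases le_or_gt c1 a1 with hc | hlt
      · exact absurd (nested_contra hRB hXs hYs hne (sub_of hc hII.le hyc hyd)) id
      · -- a1 < c1 ; the right point of X lies in Y
        cases t <;> simp only [Bool.cond_true, Bool.cond_false] at hpp hqq hcp hcq
        · -- t = false : pp = (a2, b1) ∈ Y
          have hm : pp ∈ (Icc c1 c2 ×ˢ Icc d1 d2 : Set Pt) ∩ (Rv ∪ Bv) :=
            ⟨by rw [hpp]; exact ⟨mem_Icc.2 ⟨hca, hII.le⟩, mem_Icc.2 ⟨hyc, hbd⟩⟩,
              color_sub false hcp⟩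
          rcases spec_mem_S hYs hm with h | h
          · cases t' <;> simp only [Bool.cond_true, Bool.cond_false] at hpp' hcp'
            · rw [hpp, hpp', Prod.mk.injEq] at h
              obtain ⟨h1, h2⟩ := h
              linarith
            · exact absurd (col_contra hRB hcp (by rw [h]; exact hcp')) id
          · cases t' <;> simp only [Bool.cond_true, Bool.cond_false] at hqq' hcq'
            · rw [hpp, hqq', Prod.mk.injEq] at h
              obtain ⟨h1, h2⟩ := h
              refine out a2 b1 (by rw [← hpp]; exact color_sub false hcp) ?_ ?_ ?_ ?_
              · exact (max_eq_right hL).trans h1.symm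
              · exact min_eq_left hII.le
              · exact max_eq_left hyc
              · exact (min_eq_left hyd).trans (by linarith)
            · exact absurd (col_contra hRB hcp (by rw [h]; exact hcq')) id
        · -- t = true : qq = (a2, b2) ∈ Y
          have hm : qq ∈ (Icc c1 c2 ×ˢ Icc d1 d2 : Set Pt) ∩ (Rv ∪ Bv) :=
            ⟨by rw [hqq]; exact ⟨mem_Icc.2 ⟨hca, hII.le⟩, mem_Icc.2 ⟨by linarith, hyd⟩⟩,
              color_sub true hcq⟩
          rcases spec_mem_S hYs hm with h | h
          · cases t' <;> simp only [Bool.cond_true, Bool.cond_false] at hpp' hcp'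
            · exact absurd (col_contra hRB (by rw [h]; exact hcp') hcq) id
            · rw [hqq, hpp', Prod.mk.injEq] at h
              obtain ⟨h1, h2⟩ := h
              refine out a2 b2 (by rw [← hqq]; exact color_sub true hcq) ?_ ?_ ?_ ?_
              · exact (max_eq_right hL).trans h1.symm
              · exact min_eq_left hII.le
              · exact (max_eq_right (by linarith)).trans h2.symm
              · exact min_eq_left (by linarith)
          · cases t' <;> simp only [Bool.cond_true, Bool.cond_false] at hqq' hcq'
            · exact absurd (col_contra hRB (by rw [h]; exact hcq') hcq) id
            · rw [hqq, hqq', Prod.mk.injEq] at h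
              obtain ⟨h1, h2⟩ := h
              linarith
    · -- II.2 : b1 ≤ d1, d2 ≤ b2 (X contains Y vertically)
      rcases le_or_gt c1 a1 with hc | hlt
      · exact absurd (Or.inl (pierces_of hx hy hx' hy' hc hII.le hyc hyd)) hNP
      · -- a1 < c1 : left point of Y lies in X
        cases t' <;> simp only [Bool.cond_true, Bool.cond_false] at hpp' hqq' hcp' hcq'
        · -- t' = false : qq' = (c1, d2) ∈ X
          have hm : qq' ∈ (Icc a1 a2 ×ˢ Icc b1 b2 : Set Pt) ∩ (Rv ∪ Bv) :=
            ⟨by rw [hqq']; exact ⟨mem_Icc.2 ⟨hL, hca⟩, mem_Icc.2 ⟨hbd, hyd⟩⟩,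
              color_sub false hcq'⟩
          rcases spec_mem_S hXs hm with h | h
          · cases t <;> simp only [Bool.cond_true, Bool.cond_false] at hpp hcp
            · rw [hqq', hpp, Prod.mk.injEq] at h
              obtain ⟨h1, h2⟩ := h
              refine out a2 b1 (by rw [← hpp]; exact color_sub false hcp) ?_ ?_ ?_ ?_
              · exact (max_eq_right hL).trans h1
              · exact min_eq_left hII.le
              · exact max_eq_left (by linarith)
              · exact (min_eq_right (by linarith)).trans h2
            · exact absurd (col_contra hRB hcq' (by rw [h]; exact hcp)) id
          · cases t <;> simp only [Bool.cond_true, Bool.cond_false] at hqq hcq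
            · rw [hqq', hqq, Prod.mk.injEq] at h
              obtain ⟨h1, h2⟩ := h
              linarith
            · exact absurd (col_contra hRB hcq' (by rw [h]; exact hcq)) id
        · -- t' = true : pp' = (c1, d1) ∈ X
          have hm : pp' ∈ (Icc a1 a2 ×ˢ Icc b1 b2 : Set Pt) ∩ (Rv ∪ Bv) :=
            ⟨by rw [hpp']; exact ⟨mem_Icc.2 ⟨hL, hca⟩, mem_Icc.2 ⟨hyc, hdb⟩⟩,
              color_sub true hcp'⟩
          rcases spec_mem_S hXs hm with h | h
          · cases t <;> simp only [Bool.cond_true, Bool.cond_false] at hpp hcp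
            · exact absurd (col_contra hRB (by rw [h]; exact hcp) hcp') id
            · rw [hpp', hpp, Prod.mk.injEq] at h
              obtain ⟨h1, h2⟩ := h
              linarith
          · cases t <;> simp only [Bool.cond_true, Bool.cond_false] at hqq hcq
            · exact absurd (col_contra hRB (by rw [h]; exact hcq) hcp') id
            · rw [hpp', hqq, Prod.mk.injEq] at h
              obtain ⟨h1, h2⟩ := h
              refine out a2 b2 (by rw [← hqq]; exact color_sub true hcq) ?_ ?_ ?_ ?_
              · exact (max_eq_right hL).trans h1
              · exact min_eq_left hII.le
              · exact (max_eq_right hyc).trans h2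
              · exact min_eq_left (by linarith)
    · -- II.3 : b1 ≤ d1, b2 ≤ d2 (diagonal up-right)
      rcases le_or_gt c1 a1 with hc | hlt
      · -- sub-a : c1 ≤ a1 ; the top point qq of X lies in Y
        cases t <;> simp only [Bool.cond_true, Bool.cond_false] at hpp hqq hcp hcq
        · -- t = false : qq = (a1, b2) ∈ Y
          have hm : qq ∈ (Icc c1 c2 ×ˢ Icc d1 d2 : Set Pt) ∩ (Rv ∪ Bv) :=
            ⟨by rw [hqq]; exact ⟨mem_Icc.2 ⟨hc, hac⟩, mem_Icc.2 ⟨hdb, hyd⟩⟩,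
              color_sub false hcq⟩
          rcases spec_mem_S hYs hm with h | h
          · cases t' <;> simp only [Bool.cond_true, Bool.cond_false] at hpp' hcp'
            · rw [hqq, hpp', Prod.mk.injEq] at h
              obtain ⟨h1, h2⟩ := h
              linarith
            · exact absurd (col_contra hRB hcq (by rw [h]; exact hcp')) id
          · cases t' <;> simp only [Bool.cond_true, Bool.cond_false] at hqq' hcq'
            · rw [hqq, hqq', Prod.mk.injEq] at h
              obtain ⟨h1, h2⟩ := h
              exact absurd (Or.inl (pierces_of hx hy hx' hy' h1.ge hII.le hyc h2.ge)) hNP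
            · exact absurd (col_contra hRB hcq (by rw [h]; exact hcq')) id
        · -- t = true : qq = (a2, b2) ∈ Y
          have hm : qq ∈ (Icc c1 c2 ×ˢ Icc d1 d2 : Set Pt) ∩ (Rv ∪ Bv) :=
            ⟨by rw [hqq]; exact ⟨mem_Icc.2 ⟨hca, hII.le⟩, mem_Icc.2 ⟨hdb, hyd⟩⟩,
              color_sub true hcq⟩
          rcases spec_mem_S hYs hm with h | h
          · cases t' <;> simp only [Bool.cond_true, Bool.cond_false] at hpp' hcp'
            · exact absurd (col_contra hRB (by rw [h]; exact hcp') hcq) id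
            · rw [hqq, hpp', Prod.mk.injEq] at h
              obtain ⟨h1, h2⟩ := h
              refine out a2 b2 (by rw [← hqq]; exact color_sub true hcq) ?_ ?_ ?_ ?_
              · exact (max_eq_right hL).trans h1.symm
              · exact min_eq_left hII.le
              · exact (max_eq_right hyc).trans h2.symm
              · exact min_eq_left hyd
          · cases t' <;> simp only [Bool.cond_true, Bool.cond_false] at hqq' hcq'
            · exact absurd (col_contra hRB (by rw [h]; exact hcq') hcq) id
            · rw [hqq, hqq', Prod.mk.injEq] at h
              obtain ⟨h1, h2⟩ := h
              linarith
      · -- a1 < c1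
        rcases le_or_gt d1 b1 with hd | hd
        · -- shared bottom : d1 = b1
          cases t' <;> simp only [Bool.cond_true, Bool.cond_false] at hpp' hqq' hcp' hcq'
          · -- t' = false : pp' = (c2, d1) ∉ X in general
            rcases le_or_gt d2 b2 with he2 | he2
            · -- d2 = b2 : qq' = (c1, d2) ∈ X
              have hm : qq' ∈ (Icc a1 a2 ×ˢ Icc b1 b2 : Set Pt) ∩ (Rv ∪ Bv) :=
                ⟨by rw [hqq']; exact ⟨mem_Icc.2 ⟨hL, hca⟩, mem_Icc.2 ⟨by linarith, he2⟩⟩,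
                  color_sub false hcq'⟩
              rcases spec_mem_S hXs hm with h | h
              · cases t <;> simp only [Bool.cond_true, Bool.cond_false] at hpp hcp
                · rw [hqq', hpp, Prod.mk.injEq] at h
                  obtain ⟨h1, h2⟩ := h
                  refine out a2 b1 (by rw [← hpp]; exact color_sub false hcp) ?_ ?_ ?_ ?_
                  · exact (max_eq_right hL).trans h1
                  · exact min_eq_left hII.le
                  · exact (max_eq_right hyc).trans (by linarith)
                  · exact (min_eq_left hyd).trans (by linarith)
                · rw [hqq', hpp, Prod.mk.injEq] at h
                  obtain ⟨h1, h2⟩ := h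
                  linarith
              · cases t <;> simp only [Bool.cond_true, Bool.cond_false] at hqq hcq
                · rw [hqq', hqq, Prod.mk.injEq] at h
                  obtain ⟨h1, h2⟩ := h
                  linarith
                · exact absurd (col_contra hRB hcq' (by rw [h]; exact hcq)) id
            · -- b2 < d2 : points of X inside Y
              cases t <;> simp only [Bool.cond_true, Bool.cond_false] at hpp hqq hcp hcq
              · -- t = false : pp = (a2, b1) ∈ Y
                have hm : pp ∈ (Icc c1 c2 ×ˢ Icc d1 d2 : Set Pt) ∩ (Rv ∪ Bv) :=
                  ⟨by rw [hpp]; exact ⟨mem_Icc.2 ⟨hca, hII.le⟩, mem_Icc.2 ⟨hd, by linarith⟩⟩,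
                    color_sub false hcp⟩
                rcases spec_mem_S hYs hm with h | h
                · rw [hpp, hpp', Prod.mk.injEq] at h
                  obtain ⟨h1, h2⟩ := h
                  linarith
                · rw [hpp, hqq', Prod.mk.injEq] at h
                  obtain ⟨h1, h2⟩ := h
                  linarith
              · -- t = true : qq = (a2, b2) ∈ Y
                have hm : qq ∈ (Icc c1 c2 ×ˢ Icc d1 d2 : Set Pt) ∩ (Rv ∪ Bv) :=
                  ⟨by rw [hqq]; exact ⟨mem_Icc.2 ⟨hca, hII.le⟩, mem_Icc.2 ⟨by linarith, hyd⟩⟩,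
                    color_sub true hcq⟩
                rcases spec_mem_S hYs hm with h | h
                · rw [hqq, hpp', Prod.mk.injEq] at h
                  obtain ⟨h1, h2⟩ := h
                  linarith
                · rw [hqq, hqq', Prod.mk.injEq] at h
                  obtain ⟨h1, h2⟩ := h
                  linarith
          · -- t' = true : pp' = (c1, d1) ∈ X
            have hm : pp' ∈ (Icc a1 a2 ×ˢ Icc b1 b2 : Set Pt) ∩ (Rv ∪ Bv) :=
              ⟨by rw [hpp']; exact ⟨mem_Icc.2 ⟨hL, hca⟩, mem_Icc.2 ⟨hyc, hdb⟩⟩,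
                color_sub true hcp'⟩
            rcases spec_mem_S hXs hm with h | h
            · cases t <;> simp only [Bool.cond_true, Bool.cond_false] at hpp hcp
              · exact absurd (col_contra hRB hcp (by rw [← h]; exact hcp')) id
              · rw [hpp', hpp, Prod.mk.injEq] at h
                obtain ⟨h1, h2⟩ := h
                linarith
            · cases t <;> simp only [Bool.cond_true, Bool.cond_false] at hqq hcq
              · exact absurd (col_contra hRB hcq (by rw [← h]; exact hcp')) id
              · rw [hpp', hqq, Prod.mk.injEq] at h
                obtain ⟨h1, h2⟩ := h
                refine out a2 b2 (by rw [← hqq]; exact color_sub true hcq) ?_ ?_ ?_ ?_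
                · exact (max_eq_right hL).trans h1
                · exact min_eq_left hII.le
                · exact (max_eq_right hyc).trans h2
                · exact min_eq_left hyd
        · -- b1 < d1
          rcases le_or_gt d2 b2 with he2 | he2
          · -- shared top : d2 = b2
            cases t' <;> simp only [Bool.cond_true, Bool.cond_false] at hpp' hqq' hcp' hcq'
            · -- t' = false : qq' = (c1, d2) ∈ X
              have hm : qq' ∈ (Icc a1 a2 ×ˢ Icc b1 b2 : Set Pt) ∩ (Rv ∪ Bv) :=
                ⟨by rw [hqq']; exact ⟨mem_Icc.2 ⟨hL, hca⟩, mem_Icc.2 ⟨by linarith, he2⟩⟩,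
                  color_sub false hcq'⟩
              rcases spec_mem_S hXs hm with h | h
              · cases t <;> simp only [Bool.cond_true, Bool.cond_false] at hpp hcp <;>
                  · rw [hqq', hpp, Prod.mk.injEq] at h
                    obtain ⟨h1, h2⟩ := h
                    linarith
              · cases t <;> simp only [Bool.cond_true, Bool.cond_false] at hqq hcq
                · rw [hqq', hqq, Prod.mk.injEq] at h
                  obtain ⟨h1, h2⟩ := h
                  linarith
                · exact absurd (col_contra hRB hcq' (by rw [h]; exact hcq)) id
            · -- t' = true : pp' = (c1, d1) ∈ X
              have hm : pp' ∈ (Icc a1 a2 ×ˢ Icc b1 b2 : Set Pt) ∩ (Rv ∪ Bv) :=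
                ⟨by rw [hpp']; exact ⟨mem_Icc.2 ⟨hL, hca⟩, mem_Icc.2 ⟨hd.le, hdb⟩⟩,
                  color_sub true hcp'⟩
              rcases spec_mem_S hXs hm with h | h
              · cases t <;> simp only [Bool.cond_true, Bool.cond_false] at hpp hcp <;>
                  · rw [hpp', hpp, Prod.mk.injEq] at h
                    obtain ⟨h1, h2⟩ := h
                    linarith
              · cases t <;> simp only [Bool.cond_true, Bool.cond_false] at hqq hcq
                · exact absurd (col_contra hRB hcq (by rw [← h]; exact hcp')) id
                · rw [hpp', hqq, Prod.mk.injEq] at h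
                  obtain ⟨h1, h2⟩ := h
                  refine out a2 b2 (by rw [← hqq]; exact color_sub true hcq) ?_ ?_ ?_ ?_
                  · exact (max_eq_right hL).trans h1
                  · exact min_eq_left hII.le
                  · exact (max_eq_right (by linarith)).trans h2
                  · exact (min_eq_right he2).trans (by linarith)
          · -- b2 < d2 : generic up-right overlap
            by_cases hs1 : ((c1, d1) : Pt) ∈ Rv ∪ Bv
            · have hm : ((c1, d1) : Pt) ∈ (Icc a1 a2 ×ˢ Icc b1 b2 : Set Pt) ∩ (Rv ∪ Bv) :=
                ⟨⟨mem_Icc.2 ⟨hL, hca⟩, mem_Icc.2 ⟨hd.le, hdb⟩⟩, hs1⟩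
              rcases spec_mem_S hXs hm with h | h
              · cases t <;> simp only [Bool.cond_true, Bool.cond_false] at hpp hcp <;>
                  · rw [hpp, Prod.mk.injEq] at h
                    obtain ⟨h1, h2⟩ := h
                    linarith
              · cases t <;> simp only [Bool.cond_true, Bool.cond_false] at hqq hcq
                · rw [hqq, Prod.mk.injEq] at h
                  obtain ⟨h1, h2⟩ := h
                  linarith
                · rw [hqq, Prod.mk.injEq] at h
                  obtain ⟨h1, h2⟩ := h
                  refine out a2 b2 (by rw [← hqq]; exact color_sub true hcq) ?_ ?_ ?_ ?_
                  · exact (max_eq_right hL).trans h1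
                  · exact min_eq_left hII.le
                  · exact (max_eq_right hyc).trans h2
                  · exact min_eq_left hyd
            · by_cases hs2 : ((a2, b2) : Pt) ∈ Rv ∪ Bv
              · have hm : ((a2, b2) : Pt) ∈ (Icc c1 c2 ×ˢ Icc d1 d2 : Set Pt) ∩ (Rv ∪ Bv) :=
                  ⟨⟨mem_Icc.2 ⟨hca, hII.le⟩, mem_Icc.2 ⟨hdb, he2.le⟩⟩, hs2⟩
                rcases spec_mem_S hYs hm with h | h
                · cases t' <;> simp only [Bool.cond_true, Bool.cond_false] at hpp' hcp'
                  · rw [hpp', Prod.mk.injEq] at h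
                    obtain ⟨h1, h2⟩ := h
                    linarith
                  · rw [hpp', Prod.mk.injEq] at h
                    obtain ⟨h1, h2⟩ := h
                    refine out a2 b2 hs2 ?_ ?_ ?_ ?_
                    · exact (max_eq_right hL).trans h1.symm
                    · exact min_eq_left hII.le
                    · exact (max_eq_right hyc).trans h2.symm
                    · exact min_eq_left hyd
                · cases t' <;> simp only [Bool.cond_true, Bool.cond_false] at hqq' hcq' <;>
                    · rw [hqq', Prod.mk.injEq] at h
                      obtain ⟨h1, h2⟩ := h
                      linarith
              · -- corner intersection
                exfalso
                apply hNC
                have u1 : ∀ y : Pt, y ∈ corners (Icc c1 c2 ×ˢ Icc d1 d2 : Set Pt) →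
                    y ∈ (Icc a1 a2 ×ˢ Icc b1 b2 : Set Pt) → y = ((c1, d1) : Pt) := by
                  intro y hyc' hyX
                  rw [corners_prod hx' hy'] at hyc'
                  obtain ⟨hy1, hy2⟩ := hyc'
                  obtain ⟨hm1, hm2⟩ := hyX
                  rw [mem_Icc] at hm1 hm2
                  have e1 : y.1 = c1 := by
                    rcases hy1 with h | h
                    · exact h
                    · exfalso; linarith [hm1.2]
                  have e2 : y.2 = d1 := by
                    rcases hy2 with h | h
                    · exact h
                    · exfalso; linarith [hm2.2]
                  exact Prod.ext e1 e2
                have u2 : ∀ y : Pt, y ∈ corners (Icc a1 a2 ×ˢ Icc b1 b2 : Set Pt) →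
                    y ∈ (Icc c1 c2 ×ˢ Icc d1 d2 : Set Pt) → y = ((a2, b2) : Pt) := by
                  intro y hyc' hyX
                  rw [corners_prod hx hy] at hyc'
                  obtain ⟨hy1, hy2⟩ := hyc'
                  obtain ⟨hm1, hm2⟩ := hyX
                  rw [mem_Icc] at hm1 hm2
                  have e1 : y.1 = a2 := by
                    rcases hy1 with h | h
                    · exfalso; linarith [hm1.1]
                    · exact h
                  have e2 : y.2 = b2 := by
                    rcases hy2 with h | h
                    · exfalso; linarith [hm2.1]
                    · exact h
                  exact Prod.ext e1 e2
                refine ⟨⟨(c1, d1), ⟨?_, ?_⟩, fun y hy => u1 y hy.1 hy.2⟩,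
                  ⟨(a2, b2), ⟨?_, ?_⟩, fun y hy => u2 y hy.1 hy.2⟩, ?_⟩
                · rw [corners_prod hx' hy']; exact ⟨Or.inl rfl, Or.inl rfl⟩
                · exact ⟨mem_Icc.2 ⟨hL, hca⟩, mem_Icc.2 ⟨hd.le, hdb⟩⟩
                · rw [corners_prod hx hy]; exact ⟨Or.inr rfl, Or.inr rfl⟩
                · exact ⟨mem_Icc.2 ⟨hca, hII.le⟩, mem_Icc.2 ⟨hdb, he2.le⟩⟩
                · intro c hc
                  rcases hc with hc | hc
                  · rw [u1 c hc.1 hc.2]; exact hs1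
                  · rw [u2 c hc.1 hc.2]; exact hs2

end Stmt7Aux

namespace Stmt7Aux

open Set

attribute [local instance] Classical.propDecidable

variable {Rv Bv : Set Pt}

lemma cornerInter_symm {P A B : Set Pt} (h : CornerInter P A B) : CornerInter P B A :=
  ⟨h.2.1, h.1, fun c hc => h.2.2 c hc.symm⟩

lemma piercingInter_symm {A B : Set Pt} (h : PiercingInter A B) : PiercingInter B A :=
  h.symm

/-- The key geometric lemma. -/
lemma L1 (hRB : Rv ∩ Bv = ∅) {X Y : Set Pt} {pp qq pp' qq' : Pt} {t t' : Bool}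
    (hX : Spec Rv Bv X pp qq t) (hY : Spec Rv Bv Y pp' qq' t')
    (hne : X ≠ Y) (hNP : ¬ PiercingInter X Y) (hNC : ¬ CornerInter (Rv ∪ Bv) X Y)
    (hint : (X ∩ Y).Nonempty) : ∃ s ∈ Rv ∪ Bv, X ∩ Y = {s} := by
  obtain ⟨a1, a2, b1, b2, hx, hy, hnd, hXA, hSA, hpp, hqq, hcp, hcq⟩ := hX
  obtain ⟨c1, c2, d1, d2, hx', hy', hnd', hXA', hSA', hpp', hqq', hcp', hcq'⟩ := hY
  subst hXA
  subst hXA'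
  obtain ⟨s, hs1, hs2⟩ := hint
  obtain ⟨hsx1, hsy1⟩ := hs1
  obtain ⟨hsx2, hsy2⟩ := hs2
  rw [mem_Icc] at hsx1 hsy1 hsx2 hsy2
  have hxx : max a1 c1 ≤ min a2 c2 :=
    le_trans (max_le hsx1.1 hsx2.1) (le_min hsx1.2 hsx2.2)
  have hyy : max b1 d1 ≤ min b2 d2 :=
    le_trans (max_le hsy1.1 hsy2.1) (le_min hsy1.2 hsy2.2)
  rcases le_total a1 c1 with hL | hL
  · exact L1core hRB hx hy hx' hy' hnd hnd' hSA hpp hqq hcp hcq hSA' hpp' hqq'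
      hcp' hcq' hne hNP hNC hL hxx hyy
  · have h := L1core hRB hx' hy' hx hy hnd' hnd hSA' hpp' hqq' hcp' hcq' hSA hpp hqq
      hcp hcq (Ne.symm hne) (fun hp => hNP (piercingInter_symm hp))
      (fun hcc => hNC (cornerInter_symm hcc)) hL
      (by rw [max_comm c1 a1, min_comm c2 a2]; exact hxx)
      (by rw [max_comm d1 b1, min_comm d2 b2]; exact hyy)
    obtain ⟨s', hs', he'⟩ := h
    exact ⟨s', hs', by rw [inter_comm]; exact he'⟩

lemma spec_colors {X : Set Pt} {pp qq : Pt} {t : Bool} (h : Spec Rv Bv X pp qq t) :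
    pp ∈ cond t Bv Rv ∧ qq ∈ cond t Bv Rv := by
  obtain ⟨a1, a2, b1, b2, hx, hy, hnd, hXA, hSA, hpp, hqq, hcp, hcq⟩ := h
  exact ⟨hcp, hcq⟩

/-- Canonical choice of the `Spec` data of a rectangle. -/
noncomputable def Pf (Rv Bv : Set Pt) (X : Set Pt) : Pt × Pt × Bool :=
  if h : ∃ z : Pt × Pt × Bool, Spec Rv Bv X z.1 z.2.1 z.2.2 then h.choose
  else (0, 0, false)

lemma Pf_spec {X : Set Pt} (hX : X ∈ Fam1 Rv Bv) :
    Spec Rv Bv X (Pf Rv Bv X).1 (Pf Rv Bv X).2.1 (Pf Rv Bv X).2.2 := by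
  have hex : ∃ z : Pt × Pt × Bool, Spec Rv Bv X z.1 z.2.1 z.2.2 := by
    obtain ⟨pp, qq, t, h⟩ := spec_exists hX
    exact ⟨(pp, qq, t), h⟩
  rw [Pf, dif_pos hex]
  exact hex.choose_spec

/-- Canonical choice of the single intersection point. -/
noncomputable def sigmaPt (Rv Bv : Set Pt) (X Y : Set Pt) : Pt :=
  if h : ∃ s, s ∈ Rv ∪ Bv ∧ X ∩ Y = {s} then h.choose else 0

lemma sigmaPt_spec {X Y : Set Pt} (h : ∃ s, s ∈ Rv ∪ Bv ∧ X ∩ Y = {s}) :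
    sigmaPt Rv Bv X Y ∈ Rv ∪ Bv ∧ X ∩ Y = {sigmaPt Rv Bv X Y} := by
  rw [sigmaPt, dif_pos h]
  exact h.choose_spec

lemma walk_getVert_eq_get {V : Type*} {G : SimpleGraph V} {u w : V} (p : G.Walk u w) :
    ∀ (j : ℕ) (hj : j < p.support.length), p.getVert j = p.support.get ⟨j, hj⟩ := by
  induction p with
  | nil =>
    intro j hj
    simp only [SimpleGraph.Walk.support_nil, List.length_singleton] at hj
    interval_cases j
    rfl
  | cons h p ih =>
    intro j hj
    cases j with
    | zero => rfl
    | succ k =>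
      have hk : k < p.support.length := by
        simpa [SimpleGraph.Walk.support_cons] using hj
      have h1 : (SimpleGraph.Walk.cons h p).getVert (k + 1) = p.getVert k := rfl
      rw [h1, ih k hk]
      rfl

end Stmt7Aux

open Stmt7Aux in
theorem stmt7 (R B : Set Pt) (hfin : (R ∪ B).Finite) (hdisj : R ∩ B = ∅)
    (H : Set (Set Pt)) (hH : H ⊆ Fam1 R B)
    (hnoadj : H.Pairwise fun A A' =>
      ¬ PiercingInter A A' ∧ ¬ CornerInter (R ∪ B) A A') :
    (interGraph H).IsAcyclic := by
  classical
  intro v c hc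
  set n := c.length with hnn
  have hn3 : 3 ≤ n := by rw [hnn]; exact hc.three_le_length
  have hn0 : 0 < n := by omega
  set f : ℕ → ↥H := fun i => c.getVert (i % n) with hf
  have hmod : ∀ i : ℕ, i % n < n := fun i => Nat.mod_lt _ hn0
  have hfper : ∀ i, f (i + n) = f i := by
    intro i
    show c.getVert ((i + n) % n) = c.getVert (i % n)
    rw [Nat.add_mod_right]
  -- injectivity of getVert on [0, n)
  have hlen : c.support.length = n + 1 := by rw [SimpleGraph.Walk.length_support]
  have htl : c.support.tail.length = n := by rw [List.length_tail, hlen]; omega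
  have hnodup := hc.support_nodup
  have hgv : ∀ (m : ℕ) (_h1 : 1 ≤ m) (_h2 : m ≤ n),
      c.getVert m = c.support.tail.get ⟨m - 1, by omega⟩ := by
    intro m h1 h2
    have h3 := List.get_tail c.support (m - 1) (by omega) (by omega)
    have h4 : m - 1 + 1 = m := by omega
    rw [walk_getVert_eq_get c m (by omega)]
    rw [h3]
    congr 1
    simp only [Fin.mk.injEq]
    omega
  have hvn : c.getVert n = c.getVert 0 := by
    rw [hnn, SimpleGraph.Walk.getVert_length, SimpleGraph.Walk.getVert_zero]
  have hinj : ∀ j k, j < n → k < n → c.getVert j = c.getVert k → j = k := by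
    intro j k hj hk he
    rcases Nat.eq_zero_or_pos j with hj0 | hj0 <;> rcases Nat.eq_zero_or_pos k with hk0 | hk0
    · omega
    · subst hj0
      have e : c.getVert n = c.getVert k := hvn.trans he
      rw [hgv n (by omega) le_rfl, hgv k hk0 (by omega)] at e
      have := (List.Nodup.get_inj_iff hnodup).mp e
      have h5 : n - 1 = k - 1 := by simpa using this
      omega
    · subst hk0
      have e : c.getVert n = c.getVert j := hvn.trans he.symm
      rw [hgv n (by omega) le_rfl, hgv j hj0 (by omega)] at e
      have := (List.Nodup.get_inj_iff hnodup).mp e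
      have h5 : n - 1 = j - 1 := by simpa using this
      omega
    · rw [hgv j hj0 (by omega), hgv k hk0 (by omega)] at he
      have := (List.Nodup.get_inj_iff hnodup).mp he
      have h5 : j - 1 = k - 1 := by simpa using this
      omega
  have hfneq : ∀ i k, 0 < k → k < n → f i ≠ f (i + k) := by
    intro i k hk1 hk2 he
    have h1 := hinj _ _ (hmod i) (hmod (i + k)) he
    have hik : (i % n + k) % n = (i + k) % n := Nat.mod_add_mod i n k
    rcases Nat.lt_or_ge (i % n + k) n with h | h
    · rw [← hik, Nat.mod_eq_of_lt h] at h1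
      omega
    · have h3 : i % n + k - n < n := by have := hmod i; omega
      rw [← hik, Nat.mod_eq_sub_mod h, Nat.mod_eq_of_lt h3] at h1
      have := hmod i
      omega
  have hsne : ∀ i k, 0 < k → k < n → (f i : Set Pt) ≠ ↑(f (i + k)) :=
    fun i k h1 h2 he => hfneq i k h1 h2 (Subtype.ext he)
  have hAdj : ∀ i, (interGraph H).Adj (f i) (f (i + 1)) := by
    intro i
    have key : i % n < c.length := by rw [← hnn]; exact hmod i
    have h2 := c.adj_getVert_succ key
    have h3 : c.getVert (i % n + 1) = c.getVert ((i + 1) % n) := by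
      rcases Nat.lt_or_ge (i % n + 1) n with h | h
      · rw [← Nat.mod_add_mod, Nat.mod_eq_of_lt h]
      · have h4 : i % n + 1 = n := by have := hmod i; omega
        rw [h4, ← Nat.mod_add_mod, h4, Nat.mod_self]
        exact hvn
    show (interGraph H).Adj (c.getVert (i % n)) (c.getVert ((i + 1) % n))
    rw [← h3]
    exact h2
  have hFam : ∀ i, (f i : Set Pt) ∈ Fam1 R B := fun i => hH (f i).2
  have hSp : ∀ i, Spec R B ↑(f i) (Pf R B ↑(f i)).1 (Pf R B ↑(f i)).2.1
      (Pf R B ↑(f i)).2.2 := fun i => Pf_spec (hFam i)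
  have hpair : ∀ i j, (f i : Set Pt) ≠ ↑(f j) →
      ¬ PiercingInter ↑(f i) ↑(f j) ∧ ¬ CornerInter (R ∪ B) ↑(f i) ↑(f j) :=
    fun i j hne => hnoadj (f i).2 (f j).2 hne
  have hexσ : ∀ i, ∃ s, s ∈ R ∪ B ∧ (f i : Set Pt) ∩ ↑(f (i + 1)) = {s} := by
    intro i
    have hne := hsne i 1 one_pos (by omega)
    obtain ⟨hNP, hNC⟩ := hpair i (i + 1) hne
    exact L1 hdisj (hSp i) (hSp (i + 1)) hne hNP hNC (hAdj i).2
  set σ : ℕ → Pt := fun i => sigmaPt R B ↑(f i) ↑(f (i + 1)) with hσdef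
  have hσ : ∀ i, σ i ∈ R ∪ B ∧ (f i : Set Pt) ∩ ↑(f (i + 1)) = {σ i} :=
    fun i => sigmaPt_spec (hexσ i)
  have hσmem : ∀ i, σ i ∈ (f i : Set Pt) ∩ ↑(f (i + 1)) := by
    intro i
    rw [(hσ i).2]
    exact rfl
  have hσm1 : ∀ i, σ i = (Pf R B ↑(f i)).1 ∨ σ i = (Pf R B ↑(f i)).2.1 :=
    fun i => spec_mem_S (hSp i) ⟨(hσmem i).1, (hσ i).1⟩
  have hσm2 : ∀ i, σ i = (Pf R B ↑(f (i + 1))).1 ∨ σ i = (Pf R B ↑(f (i + 1))).2.1 :=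
    fun i => spec_mem_S (hSp (i + 1)) ⟨(hσmem i).2, (hσ i).1⟩
  have hσper : σ n = σ 0 := by
    have e1 : f n = f 0 := by have := hfper 0; rwa [Nat.zero_add] at this
    have e2 : f (n + 1) = f 1 := by have := hfper 1; rwa [Nat.add_comm 1 n] at this
    show sigmaPt R B ↑(f n) ↑(f (n + 1)) = sigmaPt R B ↑(f 0) ↑(f 1)
    rw [e1, e2]
  have hTc : ∀ i, (Pf R B ↑(f (i + 1))).2.2 = (Pf R B ↑(f i)).2.2 := by
    intro i
    have c1 : σ i ∈ cond (Pf R B ↑(f i)).2.2 B R := by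
      rcases hσm1 i with h | h
      · rw [h]; exact (spec_colors (hSp i)).1
      · rw [h]; exact (spec_colors (hSp i)).2
    have c2 : σ i ∈ cond (Pf R B ↑(f (i + 1))).2.2 B R := by
      rcases hσm2 i with h | h
      · rw [h]; exact (spec_colors (hSp (i + 1))).1
      · rw [h]; exact (spec_colors (hSp (i + 1))).2
    exact color_eq hdisj c2 c1
  have hT0 : ∀ i, (Pf R B ↑(f i)).2.2 = (Pf R B ↑(f 0)).2.2 := by
    intro i
    induction i with
    | zero => rfl
    | succ k ih => rw [hTc k, ih]
  have hσne : ∀ i, σ i ≠ σ (i + 1) := by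
    intro i he
    refine no_three hdisj (hSp i) (hSp (i + 1)) (hSp (i + 2))
      (hsne i 1 one_pos (by omega)) (hsne i 2 (by omega) (by omega))
      (hsne (i + 1) 1 one_pos (by omega))
      (hpair i (i + 1) (hsne i 1 one_pos (by omega))).1
      (hpair i (i + 2) (hsne i 2 (by omega) (by omega))).1
      (hpair (i + 1) (i + 2) (hsne (i + 1) 1 one_pos (by omega))).1
      (hσm1 i) (hσm2 i) ?_
    rw [he]
    exact hσm2 (i + 1)
  have hstep : ∀ i,
      (σ i = (Pf R B ↑(f (i + 1))).1 → σ (i + 1) = (Pf R B ↑(f (i + 2))).1 ∧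
        phi (Pf R B ↑(f 0)).2.2 (σ i) < phi (Pf R B ↑(f 0)).2.2 (σ (i + 1))) ∧
      (σ i = (Pf R B ↑(f (i + 1))).2.1 → σ (i + 1) = (Pf R B ↑(f (i + 2))).2.1 ∧
        phi (Pf R B ↑(f 0)).2.2 (σ (i + 1)) < phi (Pf R B ↑(f 0)).2.2 (σ i)) := by
    intro i
    have hphi := spec_phi (hSp (i + 1))
    rw [hT0 (i + 1)] at hphi
    constructor
    · intro hfw
      have h1 : σ (i + 1) = (Pf R B ↑(f (i + 1))).2.1 := by
        rcases hσm1 (i + 1) with h | h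
        · exact absurd (h.trans hfw.symm) (Ne.symm (hσne i))
        · exact h
      have h2 : σ (i + 1) = (Pf R B ↑(f (i + 2))).1 := by
        rcases hσm2 (i + 1) with h | h
        · exact h
        · exfalso
          exact role_high hdisj (hSp (i + 1)) (hSp (i + 2))
            (hsne (i + 1) 1 one_pos (by omega))
            (hpair (i + 1) (i + 2) (hsne (i + 1) 1 one_pos (by omega))).1
            (h1.symm.trans h)
      refine ⟨h2, ?_⟩
      rw [hfw, h1]
      exact hphi
    · intro hbw
      have h1 : σ (i + 1) = (Pf R B ↑(f (i + 1))).1 := by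
        rcases hσm1 (i + 1) with h | h
        · exact h
        · exact absurd (h.trans hbw.symm) (Ne.symm (hσne i))
      have h2 : σ (i + 1) = (Pf R B ↑(f (i + 2))).2.1 := by
        rcases hσm2 (i + 1) with h | h
        · exfalso
          exact role_low hdisj (hSp (i + 1)) (hSp (i + 2))
            (hsne (i + 1) 1 one_pos (by omega))
            (hpair (i + 1) (i + 2) (hsne (i + 1) 1 one_pos (by omega))).1
            (h1.symm.trans h)
        · exact h
      refine ⟨h2, ?_⟩
      rw [hbw, h1]
      exact hphi
  rcases hσm2 0 with h0 | h0
  · have hF : ∀ i, σ i = (Pf R B ↑(f (i + 1))).1 := by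
      intro i
      induction i with
      | zero => exact h0
      | succ k ih => exact ((hstep k).1 ih).1
    have hmono : StrictMono (fun i => phi (Pf R B ↑(f 0)).2.2 (σ i)) :=
      strictMono_nat_of_lt_succ (fun i => ((hstep i).1 (hF i)).2)
    have h2 : phi (Pf R B ↑(f 0)).2.2 (σ 0) < phi (Pf R B ↑(f 0)).2.2 (σ n) := hmono hn0
    rw [hσper] at h2
    exact lt_irrefl _ h2
  · have hB : ∀ i, σ i = (Pf R B ↑(f (i + 1))).2.1 := by
      intro i
      induction i with
      | zero => exact h0
      | succ k ih => exact ((hstep k).2 ih).1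
    have hanti : StrictAnti (fun i => phi (Pf R B ↑(f 0)).2.2 (σ i)) :=
      strictAnti_nat_of_succ_lt (fun i => ((hstep i).2 (hB i)).2)
    have h2 : phi (Pf R B ↑(f 0)).2.2 (σ n) < phi (Pf R B ↑(f 0)).2.2 (σ 0) := hanti hn0
    rw [hσper] at h2
    exact lt_irrefl _ h2
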